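/- Suppose D is a countably complete ultrafilter on an ordinal γ and A' ∈ M_D is a set of ordinals such that A' ⊇ j_D[γ^+] and A' is closed under j_D(f) for every f : λ → λ (where γ < λ). Then [id]_D ∈ A'. -/

import Mathlib

open FirstOrder

namespace UAPaper

open Cardinal

/-- The universe of sets. -/
abbrev ZS : Type 1 := ZFSet.{0}

/-! ### The first-order language of set theory (one binary relation) -/

def setLang : Language where
  Functions := fun _ => Empty
  Relations := fun n => match n with | 2 => PUnit | _ => Empty

def setStructure (α : Type*) (r : α → α → Prop) : setLang.Structure α where
  funMap := fun f _ => f.elim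
  RelMap := fun {n} R v =>
    match n, R, v with
    | 2, _, v => r (v 0) (v 1)

/-- `j : α → β` is elementary with respect to the membership-like relations
`ra` and `rb`: it preserves the truth of all first-order formulas in the
language of set theory. -/
def ElemOn {α β : Type*} (ra : α → α → Prop) (rb : β → β → Prop) (j : α → β) : Prop :=
  letI := setStructure α ra
  letI := setStructure β rb
  ∀ (n : ℕ) (φ : setLang.Formula (Fin n)) (v : Fin n → α),
    φ.Realize (j ∘ v) ↔ φ.Realize v

/-! ### ZFSet-coded basics -/

/-- `x` is a (von Neumann) ordinal. -/
def IsOrd (x : ZS) : Prop := x.IsTransitive ∧ ∀ y ∈ x, ZFSet.IsTransitive y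

/-- ordinal comparison `a ≤ b`. -/
def zle (a b : ZS) : Prop := a ∈ b ∨ a = b

/-- `x` is a cardinal: an ordinal not in bijection with any smaller ordinal. -/
def IsCardZ (x : ZS) : Prop := IsOrd x ∧ ∀ y ∈ x, #y.toSet < #x.toSet

/-- `b` is the cardinal successor of `a`. -/
def CardSuccOf (a b : ZS) : Prop := IsCardZ b ∧ #b.toSet = Order.succ #a.toSet

/-- The cofinality of the ordinal `δ` is at least `#κ`: every cofinal subset of `δ`
has cardinality at least that of `κ`. -/
def CofGE (δ κ : ZS) : Prop :=
  ∀ s : Set ZS, (∀ x ∈ s, x ∈ δ) → (∀ x, x ∈ δ → ∃ y ∈ s, x ∈ y ∨ x = y) →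
    #κ.toSet ≤ #s

/-- The cofinality of the ordinal `α` is exactly (the cardinality of) `κ`. -/
def CofEq (α κ : ZS) : Prop :=
  CofGE α κ ∧ ∃ s : Set ZS, (∀ x ∈ s, x ∈ α) ∧
    (∀ x, x ∈ α → ∃ y ∈ s, x ∈ y ∨ x = y) ∧ #s ≤ #κ.toSet

/-- `F` is a (set-coded) function with domain `A`. -/
def IsFunc (F A : ZS) : Prop :=
  (∀ p ∈ F, ∃ x, x ∈ A ∧ ∃ y, p = ZFSet.pair x y) ∧
  ∀ x, x ∈ A → ∃! y, ZFSet.pair x y ∈ F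

/-- `F` is a set-coded function from `A` to `B`. -/
def IsFuncTo (F A B : ZS) : Prop :=
  IsFunc F A ∧ ∀ x y, ZFSet.pair x y ∈ F → y ∈ B

/-- The set-coded constant function on `A` with value `v`. -/
noncomputable def constFn (A v : ZS) : ZS :=
  @ZFSet.image (fun x => ZFSet.pair x v) (Classical.allZFSetDefinable _) A

/-- The image `j[A]` of a set `A` under a class function `j`. -/
noncomputable def zimage (j : ZS → ZS) (A : ZS) : ZS :=
  @ZFSet.image j (Classical.allZFSetDefinable _) A

/-- A class `M` is transitive. -/
def IsTransClass (M : ZS → Prop) : Prop := ∀ x, M x → ∀ y ∈ x, M y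

/-- `M` (a class) is closed under `λ`-sequences: every set function with domain `lam`
taking values in `M` belongs to `M`.  (`M^λ ⊆ M`.) -/
def ClosedUnderSeq (M : ZS → Prop) (lam : ZS) : Prop :=
  ∀ F, IsFunc F lam → (∀ x y, ZFSet.pair x y ∈ F → M y) → M F

/-! ### Set-coded ultrafilters and ultrapowers -/

/-- `D` is an ultrafilter on the set `A`. -/
structure IsUF (D A : ZS) : Prop where
  subsets : ∀ X ∈ D, X ⊆ A
  univ_mem : A ∈ D
  empty_not_mem : ∅ ∉ D
  inter_mem : ∀ X ∈ D, ∀ Y ∈ D, X ∩ Y ∈ D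
  superset_mem : ∀ X ∈ D, ∀ Y, X ⊆ Y → Y ⊆ A → Y ∈ D
  total : ∀ X, X ⊆ A → X ∈ D ∨ A \ X ∈ D

/-- `D` is a countably complete ultrafilter on `A`. -/
def IsCCUF (D A : ZS) : Prop :=
  IsUF D A ∧ ∀ s : ℕ → ZS, (∀ n, s n ∈ D) →
    ZFSet.sep (fun x => ∀ n, x ∈ s n) A ∈ D

/-- `D` is `κ`-complete on `A`. -/
def IsKComplete (D A κ : ZS) : Prop :=
  ∀ s : Set ZS, (∀ X ∈ s, X ∈ D) → #s < #κ.toSet →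
    ZFSet.sep (fun x => ∀ X ∈ s, x ∈ X) A ∈ D

/-- Functions (in `V`) with domain the set `A`. -/
def Fn (A : ZS) : Type 1 := {x : ZS // x ∈ A} → ZS

/-- The `D`-large set where `f` and `g` agree. -/
def agreeSet (A : ZS) (f g : Fn A) : ZS :=
  ZFSet.sep (fun x => ∀ h : x ∈ A, f ⟨x, h⟩ = g ⟨x, h⟩) A

/-- The `D`-large set where `f x ∈ g x`. -/
def memSet (A : ZS) (f g : Fn A) : ZS :=
  ZFSet.sep (fun x => ∀ h : x ∈ A, f ⟨x, h⟩ ∈ g ⟨x, h⟩) A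

/-- The ultrapower of the universe `V` by the coded ultrafilter `D` on `A`,
formed using all functions with domain `A`. -/
def Ult (D A : ZS) : Type 1 := Quot (fun f g : Fn A => agreeSet A f g ∈ D)

/-- Membership between elements of the ultrapower. -/
def memUlt (D A : ZS) (a b : Ult D A) : Prop :=
  ∃ f g : Fn A, a = Quot.mk _ f ∧ b = Quot.mk _ g ∧ memSet A f g ∈ D

/-- The canonical ultrapower embedding `j_D : V → M_D` (at the quotient level). -/
def jUlt (D A : ZS) (x : ZS) : Ult D A := Quot.mk _ fun _ => x

/-- `[id]_D`, the element of the ultrapower represented by the identity function. -/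
def idUlt (D A : ZS) : Ult D A := Quot.mk _ fun p => p.1

/-- `F` is a set-code for the function `f : A → V`. -/
def CodesFn (F A : ZS) (f : Fn A) : Prop :=
  (∀ p ∈ F, ∃ x, ∃ h : x ∈ A, p = ZFSet.pair x (f ⟨x, h⟩)) ∧
  ∀ x, ∀ h : x ∈ A, ZFSet.pair x (f ⟨x, h⟩) ∈ F

/-- `RepIn M D A a f` : the set `a` is the transitive collapse of the point of the
ultrapower of `M` by `D` (using functions coded in `M`) represented by `f`.
Defined by ∈-recursion.  Taking `M = V` (i.e. `fun _ => True`) gives the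
full ultrapower of the universe. -/
def RepIn (M : ZS → Prop) (D A : ZS) : ZS → Fn A → Prop :=
  ZFSet.mem_wf.fix
    (C := fun _ => Fn A → Prop)
    (fun a rec f =>
      (∀ b, ∀ hb : b ∈ a, ∃ g : Fn A, (∃ G, M G ∧ CodesFn G A g) ∧
        memSet A g f ∈ D ∧ rec b hb g) ∧
      (∀ g : Fn A, (∃ G, M G ∧ CodesFn G A g) → memSet A g f ∈ D →
        ∃ b, ∃ hb : b ∈ a, rec b hb g))

/-- `a` is the collapse of the point of `M_D = Ult(V, D)` represented by `f`. -/
def Rep (D A : ZS) (a : ZS) (f : Fn A) : Prop :=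
  RepIn (fun _ => True) D A a f

/-- The class `M_D`: the transitive collapse of the ultrapower of `V` by `D`. -/
def InUlt (D A : ZS) (a : ZS) : Prop := ∃ f : Fn A, Rep D A a f

/-- Membership relation on (the subclass of `V` given by) a class `M`. -/
def ClassMem (M : ZS → Prop) : {x : ZS // M x} → {x : ZS // M x} → Prop :=
  fun a b => a.1 ∈ b.1

/-- `i` restricts to an elementary embedding from the class `M` to the class `N`. -/
def IsElemClassEmb (M N : ZS → Prop) (i : ZS → ZS) : Prop :=
  ∃ h : ∀ x, M x → N (i x),
    ElemOn (ClassMem M) (ClassMem N) (fun a => ⟨i a.1, h a.1 a.2⟩)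

/-- `i : M → N` is an internal ultrapower embedding of the (transitive) class `M`:
there are `A, D ∈ M` with `D` a countably complete ultrafilter on `A` such that
`N` is the (collapsed) ultrapower of `M` by `D` computed using functions in `M`,
and `i` is the associated canonical embedding. -/
def IsInternalUltrapowerEmb (M N : ZS → Prop) (i : ZS → ZS) : Prop :=
  ∃ A D : ZS, M A ∧ M D ∧ IsCCUF D A ∧
    (∀ a, N a ↔ ∃ f : Fn A, (∃ G, M G ∧ CodesFn G A f) ∧ RepIn M D A a f) ∧
    (∀ x, M x → RepIn M D A (i x) (fun _ => x))

/-- `j : V → M` is an ultrapower embedding of the universe by a countably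
complete ultrafilter. -/
def IsUltrapowerEmbV (M : ZS → Prop) (j : ZS → ZS) : Prop :=
  IsInternalUltrapowerEmb (fun _ => True) M j

/-- `(i0, i1) : (M0, M1) → N` is a semicomparison of `(j0 : V → M0, j1 : V → M1)`:
`i0` is elementary, `i1` is an internal ultrapower embedding of `M1`, and
`i0 ∘ j0 = i1 ∘ j1`. -/
structure Semicomparison (M0 M1 N : ZS → Prop) (j0 j1 i0 i1 : ZS → ZS) : Prop where
  elem0 : IsElemClassEmb M0 N i0
  internal1 : IsInternalUltrapowerEmb M1 N i1
  comm : ∀ x, i0 (j0 x) = i1 (j1 x)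

/-- A comparison of `(j0, j1)` : both `(i0,i1)` and `(i1,i0)` are semicomparisons. -/
def Comparison (M0 M1 N : ZS → Prop) (j0 j1 i0 i1 : ZS → ZS) : Prop :=
  Semicomparison M0 M1 N j0 j1 i0 i1 ∧ Semicomparison M1 M0 N j1 j0 i1 i0

/-- The Ultrapower Axiom: every pair of ultrapower embeddings admits a comparison. -/
def UA : Prop :=
  ∀ (M0 M1 : ZS → Prop) (j0 j1 : ZS → ZS),
    IsUltrapowerEmbV M0 j0 → IsUltrapowerEmbV M1 j1 →
    ∃ (N : ZS → Prop) (i0 i1 : ZS → ZS),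
      Comparison M0 M1 N j0 j1 i0 i1

/-! ### Supercompactness and normal fine ultrafilters -/

/-- An elementary embedding of `V` into a transitive class `M`. -/
def IsElemEmbV (M : ZS → Prop) (j : ZS → ZS) : Prop :=
  IsTransClass M ∧ IsElemClassEmb (fun _ => True) M j

/-- `κ` is `lam`-supercompact: there is an elementary `j : V → M` with critical
point `κ`, `j(κ) > lam`, and `M` closed under `lam`-sequences. -/
def IsSupercompact (κ lam : ZS) : Prop :=
  ∃ (M : ZS → Prop) (j : ZS → ZS), IsElemEmbV M j ∧
    (∀ x ∈ κ, j x = x) ∧ κ ∈ j κ ∧ lam ∈ j κ ∧ ClosedUnderSeq M lam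

/-- `P_κ(δ)` : the set of subsets of `δ` of cardinality less than `κ`. -/
noncomputable def Pk (κ δ : ZS) : ZS :=
  ZFSet.sep (fun x => #x.toSet < #κ.toSet) (ZFSet.powerset δ)

/-- `D` is a normal fine `κ`-complete ultrafilter on `P_κ(δ)`. -/
structure IsNFUF (D κ δ : ZS) : Prop where
  uf : IsUF D (Pk κ δ)
  cc : IsCCUF D (Pk κ δ)
  kcomplete : IsKComplete D (Pk κ δ) κ
  fine : ∀ α ∈ δ, ZFSet.sep (fun σ => α ∈ σ) (Pk κ δ) ∈ D
  normal : ∀ f : ZS → ZS,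
    ZFSet.sep (fun σ => f σ ∈ σ) (Pk κ δ) ∈ D →
    ∃ α ∈ δ, ZFSet.sep (fun σ => f σ = α) (Pk κ δ) ∈ D

end UAPaper

namespace UAPaper

open Cardinal

/-- `D` is uniform on `A`: every member has full cardinality. -/
def UniformOn (D A : ZS) : Prop := ∀ X ∈ D, #X.toSet = #A.toSet

/-- A uniform ultrafilter `D` on the cardinal `μ` is seed-minimal if no regressive
function is one-to-one on a `D`-large set. -/
def SeedMinimal (D μ : ZS) : Prop :=
  ∀ f : ZS → ZS, (∀ x, x ∈ μ → x ≠ ∅ → f x ∈ x) →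
    ∀ X ∈ D, ¬ Set.InjOn f X.toSet

/-- `D` (on `A`) and `E` (on `B`) are isomorphic in the Rudin–Keisler sense, via a
map which is a bijection between sets in the respective ultrafilters. -/
def UFIso (D A E B : ZS) : Prop :=
  ∃ (h : ZS → ZS) (X Y : ZS), X ∈ D ∧ Y ∈ E ∧
    Set.BijOn h X.toSet Y.toSet ∧
    ∀ Z : ZS, Z ⊆ B → (Z ∈ E ↔ ZFSet.sep (fun x => h x ∈ Z) A ∈ D)

/-! ### Clubs, stationary sets and diamond -/

/-- A club subset of the (ZFSet) ordinal `lam`. -/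
def ZClub (lam : ZS) (C : Set ZS) : Prop :=
  (∀ x ∈ C, x ∈ lam) ∧
  (∀ x, x ∈ lam → ∃ y ∈ C, x ∈ y ∨ x = y) ∧
  (∀ β, β ∈ lam → β ≠ ∅ → (∀ z ∈ β, ∃ y ∈ C, y ∈ β ∧ (z ∈ y ∨ z = y)) → β ∈ C)

/-- A stationary subset of the (ZFSet) ordinal `lam`. -/
def ZStationary (lam : ZS) (S : Set ZS) : Prop :=
  (∀ x ∈ S, x ∈ lam) ∧ ∀ C, ZClub lam C → (S ∩ C).Nonempty

/-- Jensen's diamond on the set `S ⊆ lam` (for ZFSet ordinals). -/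
def ZDiamond (lam : ZS) (S : Set ZS) : Prop :=
  ∃ A : ZS → ZS, (∀ α, α ∈ S → A α ⊆ α) ∧
    ∀ X : ZS, X ⊆ lam → ZStationary lam {α | α ∈ S ∧ X ∩ α = A α}

/-- A club subset of the ordinal `lam` (Mathlib ordinals). -/
def IsClub (lam : Ordinal) (C : Set Ordinal) : Prop :=
  (∀ α ∈ C, α < lam) ∧
  (∀ α, α < lam → ∃ β ∈ C, α < β) ∧
  (∀ β, β < lam → 0 < β → (∀ γ, γ < β → ∃ δ ∈ C, γ < δ ∧ δ < β) → β ∈ C)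

/-- A stationary subset of the ordinal `lam`. -/
def IsStationary (lam : Ordinal) (S : Set Ordinal) : Prop :=
  (∀ α ∈ S, α < lam) ∧ ∀ C, IsClub lam C → (S ∩ C).Nonempty

/-- Jensen's diamond principle `◇(S)` for `S ⊆ lam`. -/
def Diamond (lam : Ordinal) (S : Set Ordinal) : Prop :=
  ∃ A : Ordinal → Set Ordinal, (∀ α ∈ S, A α ⊆ Set.Iio α) ∧
    ∀ X : Set Ordinal, X ⊆ Set.Iio lam →
      IsStationary lam {α ∈ S | X ∩ Set.Iio α = A α}

/-- Kunen's `◇⁻(S)` for `S ⊆ lam`. -/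
def DiamondMinus (lam : Ordinal) (S : Set Ordinal) : Prop :=
  ∃ 𝒜 : Ordinal → Set (Set Ordinal),
    (∀ α ∈ S, ∀ a ∈ 𝒜 α, a ⊆ Set.Iio α) ∧
    (∀ α ∈ S, #(𝒜 α) ≤ #(Set.Iio α)) ∧
    ∀ X : Set Ordinal, X ⊆ Set.Iio lam →
      IsStationary lam {α ∈ S | X ∩ Set.Iio α ∈ 𝒜 α}

end UAPaper
namespace UAPaper
open Cardinal

/-! ### Auxiliary lemmas (ordinals) -/

theorem isOrd_of_mem {x y : ZS} (hx : IsOrd x) (hy : y ∈ x) : IsOrd y :=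
  ⟨hx.2 y hy, fun z hz => hx.2 z (hx.1 y hy hz)⟩

theorem ord_trichotomy : ∀ x : ZS, IsOrd x → ∀ y : ZS, IsOrd y → x ∈ y ∨ x = y ∨ y ∈ x := by
  intro x
  induction x using ZFSet.mem_wf.induction with
  | _ x IHx =>
  intro hx y
  induction y using ZFSet.mem_wf.induction with
  | _ y IHy =>
  intro hy
  by_cases hxy : x ∈ y
  · exact Or.inl hxy
  by_cases hyx : y ∈ x
  · exact Or.inr (Or.inr hyx)
  refine Or.inr (Or.inl (ZFSet.ext fun z => ⟨fun hz => ?_, fun hz => ?_⟩))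
  · rcases IHx z hz (isOrd_of_mem hx hz) y hy with h | h | h
    · exact h
    · exact absurd (h ▸ hz) hyx
    · exact absurd (hx.1 z hz h) hyx
  · rcases IHy z hz (isOrd_of_mem hy hz) with h | h | h
    · exact absurd (hy.1 z hz h) hxy
    · exact absurd (h ▸ hz) hxy
    · exact h

theorem ord_subset_mem_or_eq {x y : ZS} (hx : IsOrd x) (hy : IsOrd y) (h : x ⊆ y) :
    x ∈ y ∨ x = y := by
  rcases ord_trichotomy x hx y hy with h1 | h1 | h1
  · exact Or.inl h1
  · exact Or.inr h1
  · exact absurd (h h1) (ZFSet.mem_irrefl y)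

theorem isOrd_sUnion {S : ZS} (h : ∀ b ∈ S, IsOrd b) : IsOrd (ZFSet.sUnion S) := by
  constructor
  · intro v hv w hw
    rcases ZFSet.mem_sUnion.1 hv with ⟨b, hb, hvb⟩
    exact ZFSet.mem_sUnion.2 ⟨b, hb, (h b hb).1 v hvb hw⟩
  · intro v hv
    rcases ZFSet.mem_sUnion.1 hv with ⟨b, hb, hvb⟩
    exact (isOrd_of_mem (h b hb) hvb).1

theorem isOrd_succ {x : ZS} (hx : IsOrd x) : IsOrd (insert x x) := by
  constructor
  · intro y hy z hz
    rcases ZFSet.mem_insert_iff.1 hy with rfl | hy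
    · exact ZFSet.mem_insert_iff.2 (Or.inr hz)
    · exact ZFSet.mem_insert_iff.2 (Or.inr (hx.1 y hy hz))
  · intro y hy
    rcases ZFSet.mem_insert_iff.1 hy with rfl | hy
    · exact hx.1
    · exact (isOrd_of_mem hx hy).1

theorem empty_mem_ord {x : ZS} (hx : IsOrd x) (hne : x ≠ ∅) : ∅ ∈ x := by
  rcases ZFSet.regularity x hne with ⟨y, hy, hyx⟩
  have : y = ∅ := by
    rw [← hyx]
    refine (ZFSet.ext fun z => ⟨fun hz => ZFSet.mem_inter.2 ⟨hx.1 y hy hz, hz⟩,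
      fun hz => (ZFSet.mem_inter.1 hz).2⟩)
  exact this ▸ hy

/-- elements of an ordinal have cardinality at most that of the ordinal -/
theorem mk_le_of_mem_ord {x y : ZS} (hx : IsOrd x) (hy : y ∈ x) : #y.toSet ≤ #x.toSet :=
  Cardinal.mk_le_mk_of_subset (ZFSet.coe_subset_coe.2 (hx.1 y hy))

end UAPaper
namespace UAPaper
open Cardinal

/-! ### Ultrafilter helpers -/

section UF
variable {D A : ZS} (hUF : IsUF D A)

theorem sep_subset (p : ZS → Prop) : ZFSet.sep p A ⊆ A := fun _ h => (ZFSet.mem_sep.1 h).1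

include hUF

theorem D_nonempty {X : ZS} (hX : X ∈ D) : ∃ x, x ∈ X := by
  by_contra h
  push_neg at h
  have : X = ∅ := (ZFSet.eq_empty X).2 h
  exact hUF.empty_not_mem (this ▸ hX)

theorem D_sep_mono {p q : ZS → Prop} (hp : ZFSet.sep p A ∈ D)
    (h : ∀ x ∈ A, p x → q x) : ZFSet.sep q A ∈ D := by
  refine hUF.superset_mem _ hp _ (fun x hx => ?_) (sep_subset q)
  rcases ZFSet.mem_sep.1 hx with ⟨hxA, hpx⟩
  exact ZFSet.mem_sep.2 ⟨hxA, h x hxA hpx⟩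

theorem D_sep_mono2 {p q r : ZS → Prop} (hp : ZFSet.sep p A ∈ D) (hq : ZFSet.sep q A ∈ D)
    (h : ∀ x ∈ A, p x → q x → r x) : ZFSet.sep r A ∈ D := by
  have hi : ZFSet.sep p A ∩ ZFSet.sep q A ∈ D := hUF.inter_mem _ hp _ hq
  refine hUF.superset_mem _ hi _ (fun x hx => ?_) (sep_subset r)
  rcases ZFSet.mem_inter.1 hx with ⟨h1, h2⟩
  rcases ZFSet.mem_sep.1 h1 with ⟨hxA, hpx⟩
  exact ZFSet.mem_sep.2 ⟨hxA, h x hxA hpx (ZFSet.mem_sep.1 h2).2⟩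

theorem D_sep_all {p : ZS → Prop} (h : ∀ x ∈ A, p x) : ZFSet.sep p A ∈ D := by
  refine hUF.superset_mem _ hUF.univ_mem _ (fun x hx => ?_) (sep_subset p)
  exact ZFSet.mem_sep.2 ⟨hx, h x hx⟩

theorem D_sep_not {p : ZS → Prop} (h : ZFSet.sep p A ∉ D) :
    ZFSet.sep (fun x => ¬ p x) A ∈ D := by
  have ht := (hUF.total _ (sep_subset p)).resolve_left h
  refine hUF.superset_mem _ ht _ (fun x hx => ?_) (sep_subset _)
  rcases ZFSet.mem_sdiff.1 hx with ⟨hxA, hns⟩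
  exact ZFSet.mem_sep.2 ⟨hxA, fun hpx => hns (ZFSet.mem_sep.2 ⟨hxA, hpx⟩)⟩

theorem D_sep_two {p q : ZS → Prop} (hp : ZFSet.sep p A ∈ D) (hq : ZFSet.sep q A ∈ D) :
    ∃ x ∈ A, p x ∧ q x := by
  obtain ⟨x, hx⟩ := D_nonempty hUF (hUF.inter_mem _ hp _ hq)
  rcases ZFSet.mem_inter.1 hx with ⟨h1, h2⟩
  exact ⟨x, (ZFSet.mem_sep.1 h1).1, (ZFSet.mem_sep.1 h1).2, (ZFSet.mem_sep.1 h2).2⟩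

end UF

/-! ### Rep machinery -/

theorem mem_zimage {j : ZS → ZS} {A y : ZS} : y ∈ zimage j A ↔ ∃ x ∈ A, j x = y :=
  @ZFSet.mem_image j (Classical.allZFSetDefinable _) A y

open scoped Classical in
theorem exists_code (A : ZS) (f : Fn A) : ∃ G, CodesFn G A f := by
  refine ⟨zimage (fun x => if h : x ∈ A then ZFSet.pair x (f ⟨x, h⟩) else ∅) A, ?_, ?_⟩
  · intro p hp
    rcases mem_zimage.1 hp with ⟨x, hx, he⟩
    exact ⟨x, hx, by rw [← he, dif_pos hx]⟩
  · intro x h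
    exact mem_zimage.2 ⟨x, h, by rw [dif_pos h]⟩

theorem RepIn_iff (M : ZS → Prop) (D A a : ZS) (f : Fn A) :
    RepIn M D A a f ↔
      ((∀ b, b ∈ a → ∃ g : Fn A, (∃ G, M G ∧ CodesFn G A g) ∧
        memSet A g f ∈ D ∧ RepIn M D A b g) ∧
      (∀ g : Fn A, (∃ G, M G ∧ CodesFn G A g) → memSet A g f ∈ D →
        ∃ b, b ∈ a ∧ RepIn M D A b g)) := by
  have h := congrFun (ZFSet.mem_wf.fix_eq
    (C := fun _ => Fn A → Prop)
    (fun a rec f =>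
      (∀ b, ∀ hb : b ∈ a, ∃ g : Fn A, (∃ G, M G ∧ CodesFn G A g) ∧
        memSet A g f ∈ D ∧ rec b hb g) ∧
      (∀ g : Fn A, (∃ G, M G ∧ CodesFn G A g) → memSet A g f ∈ D →
        ∃ b, ∃ hb : b ∈ a, rec b hb g)) a) f
  rw [RepIn, h]
  constructor
  · rintro ⟨h1, h2⟩
    refine ⟨fun b hb => h1 b hb, fun g hc hm => ?_⟩
    obtain ⟨b, hb, hr⟩ := h2 g hc hm
    exact ⟨b, hb, hr⟩
  · rintro ⟨h1, h2⟩
    refine ⟨fun b hb => h1 b hb, fun g hc hm => ?_⟩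
    obtain ⟨b, hb, hr⟩ := h2 g hc hm
    exact ⟨b, hb, hr⟩

theorem Rep_iff (D A a : ZS) (f : Fn A) :
    Rep D A a f ↔
      ((∀ b, b ∈ a → ∃ g : Fn A, memSet A g f ∈ D ∧ Rep D A b g) ∧
      (∀ g : Fn A, (∃ G, CodesFn G A g) → memSet A g f ∈ D →
        ∃ b, b ∈ a ∧ Rep D A b g)) := by
  rw [Rep, RepIn_iff]
  constructor
  · rintro ⟨h1, h2⟩
    refine ⟨fun b hb => ?_, fun g hc hm => h2 g (by rcases hc with ⟨G, hG⟩; exact ⟨G, trivial, hG⟩) hm⟩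
    obtain ⟨g, _, hm, hr⟩ := h1 b hb
    exact ⟨g, hm, hr⟩
  · rintro ⟨h1, h2⟩
    refine ⟨fun b hb => ?_, fun g hc hm => h2 g (by rcases hc with ⟨G, _, hG⟩; exact ⟨G, hG⟩) hm⟩
    obtain ⟨g, hm, hr⟩ := h1 b hb
    obtain ⟨G, hG⟩ := exists_code A g
    exact ⟨g, ⟨G, trivial, hG⟩, hm, hr⟩

end UAPaper
namespace UAPaper
open Cardinal

theorem agreeSet_comm {A : ZS} {f g : Fn A} : agreeSet A f g = agreeSet A g f := by
  refine ZFSet.ext fun x => ?_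
  simp only [agreeSet, ZFSet.mem_sep]
  exact ⟨fun ⟨h1, h2⟩ => ⟨h1, fun h => (h2 h).symm⟩, fun ⟨h1, h2⟩ => ⟨h1, fun h => (h2 h).symm⟩⟩

section Rep
variable {D A : ZS} (hUF : IsUF D A)
include hUF

theorem memSet_congr_left {f f' g : Fn A} (hff' : agreeSet A f f' ∈ D)
    (h : memSet A f' g ∈ D) : memSet A f g ∈ D :=
  D_sep_mono2 hUF hff' h (fun x _ h1 h2 hh => by rw [h1 hh]; exact h2 hh)

theorem memSet_congr_right {f g g' : Fn A} (hgg' : agreeSet A g g' ∈ D)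
    (h : memSet A f g ∈ D) : memSet A f g' ∈ D :=
  D_sep_mono2 hUF hgg' h (fun x _ h1 h2 hh => by rw [← h1 hh]; exact h2 hh)

theorem rep_congr {f g : Fn A} (hfg : agreeSet A f g ∈ D) {a : ZS}
    (h : Rep D A a f) : Rep D A a g := by
  rw [Rep_iff] at h ⊢
  refine ⟨fun b hb => ?_, fun g' hc hm => ?_⟩
  · obtain ⟨h', hm, hr⟩ := h.1 b hb
    exact ⟨h', memSet_congr_right hUF hfg hm, hr⟩
  · exact h.2 g' hc (memSet_congr_right hUF (agreeSet_comm ▸ hfg) hm)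

omit hUF in
theorem rep_unique : ∀ a : ZS, ∀ f : Fn A, Rep D A a f → ∀ b : ZS, Rep D A b f → a = b := by
  intro a
  induction a using ZFSet.mem_wf.induction with
  | _ a IH =>
  intro f ha b hb
  rw [Rep_iff] at ha hb
  refine ZFSet.ext fun c => ⟨fun hc => ?_, fun hc => ?_⟩
  · obtain ⟨g, hm, hr⟩ := ha.1 c hc
    obtain ⟨c', hc', hr'⟩ := hb.2 g (exists_code A g) hm
    rw [IH c hc g hr c' hr']; exact hc'
  · obtain ⟨g, hm, hr⟩ := hb.1 c hc
    obtain ⟨c', hc', hr'⟩ := ha.2 g (exists_code A g) hm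
    rw [← IH c' hc' g hr' c hr]; exact hc'

theorem rep_funext : ∀ a : ZS, ∀ f g : Fn A, Rep D A a f → Rep D A a g →
    agreeSet A f g ∈ D := by
  intro a
  induction a using ZFSet.mem_wf.induction with
  | _ a IH =>
  intro f g hf hg
  by_contra hne
  have key : ∀ f g : Fn A, Rep D A a f → Rep D A a g →
      ∀ w : Fn A,
        ZFSet.sep (fun x => ∀ h : x ∈ A, w ⟨x,h⟩ ∈ f ⟨x,h⟩ ∧ w ⟨x,h⟩ ∉ g ⟨x,h⟩) A ∈ D →
        False := by
    intro f g hf hg w hS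
    have hmwf : memSet A w f ∈ D := D_sep_mono hUF hS (fun x _ hp hh => (hp hh).1)
    obtain ⟨b, hb, hbw⟩ := ((Rep_iff ..).1 hf).2 w (exists_code A w) hmwf
    obtain ⟨h', hm', hr'⟩ := ((Rep_iff ..).1 hg).1 b hb
    have hag : agreeSet A w h' ∈ D := IH b hb w h' hbw hr'
    have hmg : memSet A w g ∈ D := memSet_congr_left hUF hag hm'
    obtain ⟨x, hxA, h1, h2⟩ := D_sep_two hUF hS hmg
    exact (h1 hxA).2 (h2 hxA)
  have hSne : ZFSet.sep (fun x => ¬ ∀ h : x ∈ A, f ⟨x,h⟩ = g ⟨x,h⟩) A ∈ D :=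
    D_sep_not hUF hne
  classical
  set w : Fn A := fun p =>
    if h : ∃ z, (z ∈ f p ∧ z ∉ g p) ∨ (z ∈ g p ∧ z ∉ f p) then h.choose else ∅ with hw
  by_cases hc :
      ZFSet.sep (fun x => ∀ h : x ∈ A, w ⟨x,h⟩ ∈ f ⟨x,h⟩ ∧ w ⟨x,h⟩ ∉ g ⟨x,h⟩) A ∈ D
  · exact key f g hf hg w hc
  · have hc2 : ZFSet.sep (fun x => ∀ h : x ∈ A, w ⟨x,h⟩ ∈ g ⟨x,h⟩ ∧ w ⟨x,h⟩ ∉ f ⟨x,h⟩) A ∈ D := by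
      refine D_sep_mono2 hUF (D_sep_not hUF hc) hSne (fun x hx hnp hnq hh => ?_)
      have hne' : f ⟨x,hh⟩ ≠ g ⟨x,hh⟩ := fun he => hnq (fun _ => he)
      have hex : ∃ z, (z ∈ f ⟨x,hh⟩ ∧ z ∉ g ⟨x,hh⟩) ∨ (z ∈ g ⟨x,hh⟩ ∧ z ∉ f ⟨x,hh⟩) := by
        by_contra hno
        push_neg at hno
        refine hne' (ZFSet.ext fun z => ⟨fun hz => ?_, fun hz => ?_⟩)
        · by_contra hz2; exact hz2 ((hno z).1 hz)
        · by_contra hz2; exact hz2 ((hno z).2 hz)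
      have hwx : (w ⟨x,hh⟩ ∈ f ⟨x,hh⟩ ∧ w ⟨x,hh⟩ ∉ g ⟨x,hh⟩) ∨
          (w ⟨x,hh⟩ ∈ g ⟨x,hh⟩ ∧ w ⟨x,hh⟩ ∉ f ⟨x,hh⟩) := by
        rw [hw]
        simp only
        rw [dif_pos hex]
        exact hex.choose_spec
      rcases hwx with h1 | h1
      · exact absurd (fun _ => h1) hnp
      · exact h1
    exact key g f hg hf w hc2

theorem rep_mem_iff {a b : ZS} {f g : Fn A} (ha : Rep D A a f) (hb : Rep D A b g) :
    a ∈ b ↔ memSet A f g ∈ D := by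
  constructor
  · intro hab
    obtain ⟨h', hm', hr'⟩ := ((Rep_iff ..).1 hb).1 a hab
    exact memSet_congr_left hUF (rep_funext hUF a f h' ha hr') hm'
  · intro hm
    obtain ⟨a', ha', hr'⟩ := ((Rep_iff ..).1 hb).2 f (exists_code A f) hm
    rwa [rep_unique a f ha a' hr']

theorem rep_upair {a b : ZS} {f g : Fn A} (ha : Rep D A a f) (hb : Rep D A b g) :
    Rep D A ({a, b} : ZS) (fun p => ({f p, g p} : ZS)) := by
  refine (Rep_iff ..).2 ?_
  constructor
  · intro c hc
    rcases ZFSet.mem_pair.1 hc with rfl | rfl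
    · exact ⟨f, D_sep_all hUF (fun x hx hh => ZFSet.mem_pair.2 (Or.inl rfl)), ha⟩
    · exact ⟨g, D_sep_all hUF (fun x hx hh => ZFSet.mem_pair.2 (Or.inr rfl)), hb⟩
  · intro h hc hm
    by_cases haf : agreeSet A h f ∈ D
    · exact ⟨a, ZFSet.mem_pair.2 (Or.inl rfl), rep_congr hUF (agreeSet_comm ▸ haf) ha⟩
    · have hag : agreeSet A h g ∈ D := by
        refine D_sep_mono2 hUF (D_sep_not hUF haf) hm (fun x hx hnp hp hh => ?_)
        rcases ZFSet.mem_pair.1 (hp hh) with he | he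
        · exact absurd (fun _ => he) hnp
        · exact he
      exact ⟨b, ZFSet.mem_pair.2 (Or.inr rfl), rep_congr hUF (agreeSet_comm ▸ hag) hb⟩

theorem rep_singleton {a : ZS} {f : Fn A} (ha : Rep D A a f) :
    Rep D A ({a} : ZS) (fun p => ({f p} : ZS)) := by
  have h := rep_upair hUF ha ha
  have e1 : ({a, a} : ZS) = {a} := ZFSet.ext (by simp)
  have e2 : (fun p : {x // x ∈ A} => ({f p, f p} : ZS)) = fun p => ({f p} : ZS) :=
    funext fun p => ZFSet.ext (by simp)
  rwa [e1, e2] at h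

theorem rep_opair {a b : ZS} {f g : Fn A} (ha : Rep D A a f) (hb : Rep D A b g) :
    Rep D A (ZFSet.pair a b) (fun p => ZFSet.pair (f p) (g p)) :=
  rep_upair hUF (rep_singleton hUF ha) (rep_upair hUF ha hb)

end Rep

end UAPaper
namespace UAPaper
open Cardinal

theorem mk_zimage_le (j : ZS → ZS) (A : ZS) : #(zimage j A).toSet ≤ #A.toSet := by
  have : (zimage j A).toSet = j '' A.toSet :=
    @ZFSet.coe_image j (Classical.allZFSetDefinable _) A
  rw [this]
  exact Cardinal.mk_image_le

theorem mk_sUnion_le' (S : ZS) (c : Cardinal) (hS : #S.toSet ≤ c)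
    (hel : ∀ b ∈ S, #b.toSet ≤ c) (hc : ℵ₀ ≤ c) : #(ZFSet.sUnion S).toSet ≤ c := by
  rw [show (ZFSet.sUnion S).toSet = ⋃₀ (ZFSet.toSet '' S.toSet) from ZFSet.coe_sUnion S]
  refine le_trans (Cardinal.mk_sUnion_le _) ?_
  have h1 : #(ZFSet.toSet '' S.toSet) ≤ c := le_trans Cardinal.mk_image_le hS
  have h2 : ⨆ s : (ZFSet.toSet '' S.toSet), #s ≤ c := by
    refine ciSup_le' fun s => ?_
    obtain ⟨b, hb, he⟩ := s.2
    have : #(s : Set ZS) = #b.toSet := by rw [he]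
    rw [this]
    exact hel b hb
  calc #(ZFSet.toSet '' S.toSet) * (⨆ s : (ZFSet.toSet '' S.toSet), #s)
      ≤ c * c := mul_le_mul' h1 h2
    _ = c := mul_eq_self hc

open scoped Classical in
noncomputable def sdrFun (B : ZS → ZS) : ZS → ZS :=
  ZFSet.mem_wf.fix (C := fun _ => ZS) fun ζ rec =>
    if h : ((B ζ).toSet \ Set.range fun p : {y // y ∈ ζ} => rec p.1 p.2).Nonempty
    then h.choose else ∅

open scoped Classical in
theorem sdrFun_eq (B : ZS → ZS) (ζ : ZS) :
    sdrFun B ζ =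
      if h : ((B ζ).toSet \ Set.range fun p : {y // y ∈ ζ} => sdrFun B p.1).Nonempty
      then h.choose else ∅ := by
  rw [sdrFun, WellFounded.fix_eq]

open scoped Classical in
theorem sdrFun_spec (B : ZS → ZS) {ζ : ZS} (h : #ζ.toSet < #(B ζ).toSet) :
    sdrFun B ζ ∈ B ζ ∧ ∀ y ∈ ζ, sdrFun B ζ ≠ sdrFun B y := by
  have hne : ((B ζ).toSet \ Set.range fun p : {y // y ∈ ζ} => sdrFun B p.1).Nonempty := by
    rw [Set.nonempty_iff_ne_empty]
    intro he
    have hsub : (B ζ).toSet ⊆ Set.range fun p : {y // y ∈ ζ} => sdrFun B p.1 :=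
      Set.diff_eq_empty.1 he
    have hle : #(B ζ).toSet ≤ #ζ.toSet :=
      (Cardinal.mk_le_mk_of_subset hsub).trans Cardinal.mk_range_le
    exact absurd hle (not_le.2 h)
  have heq : sdrFun B ζ = hne.choose := by rw [sdrFun_eq, dif_pos hne]
  have hsp := hne.choose_spec
  rw [← heq] at hsp
  obtain ⟨h1, h2⟩ := hsp
  exact ⟨h1, fun y hy hcon => h2 ⟨⟨y, hy⟩, hcon.symm⟩⟩

end UAPaper

namespace UAPaper

open Cardinal

/-- the key step of the club lemma. -/
theorem statement13 (γ lam : ZS) (hγ : IsOrd γ) (hlam : IsCardZ lam) (hgle : γ ∈ lam)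
    (D : ZS) (hD : IsCCUF D γ)
    (jD : ZS → ZS) (hjD : ∀ x, Rep D γ (jD x) (fun _ => x))
    (γ1 : ZS) (hγ1 : CardSuccOf γ γ1)
    (A' : ZS) (hA'M : InUlt D γ A') (hords : ∀ x ∈ A', IsOrd x)
    (hsup : ∀ x ∈ γ1, jD x ∈ A')
    (hclosed : ∀ F : ZS, IsFuncTo F lam lam → ∀ ξ ∈ A', ∀ y, ZFSet.pair ξ y ∈ jD F → y ∈ A')
    (ξ : ZS) (hξ : Rep D γ ξ (fun p => p.1)) :
    ξ ∈ A' := by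
  classical
  obtain ⟨hUF, hCC⟩ := hD
  obtain ⟨fA, hfA⟩ := hA'M
  have hγ1card : IsCardZ γ1 := hγ1.1
  have hγ1ord : IsOrd γ1 := hγ1card.1
  have hγ1mk : #γ1.toSet = Order.succ #γ.toSet := hγ1.2
  have hlamord : IsOrd lam := hlam.1
  have hγγ1 : γ ∈ γ1 := by
    rcases ord_trichotomy γ hγ γ1 hγ1ord with h | h | h
    · exact h
    · exfalso
      have h2 := hγ1mk
      rw [← h] at h2
      exact (Order.lt_succ (#γ.toSet)).ne h2
    · have hle := mk_le_of_mem_ord hγ h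
      rw [hγ1mk] at hle
      exact absurd hle (not_le.2 (Order.lt_succ _))
  have hγsub1 : γ ⊆ γ1 := hγ1ord.1 γ hγγ1
  have hmem1 : ∀ y, y ∈ γ1 → #y.toSet ≤ #γ.toSet := by
    intro y hy
    have := hγ1card.2 y hy
    rw [hγ1mk] at this
    exact Order.lt_succ_iff.1 this
  have hγ1lam : γ1 ⊆ lam := by
    rcases ord_trichotomy γ1 hγ1ord lam hlamord with h | h | h
    · exact hlamord.1 γ1 h
    · exact h ▸ fun z hz => hz
    · exact absurd (hmem1 lam h) (not_le.2 (hlam.2 γ hgle))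
  have hγlam : γ ⊆ lam := hlamord.1 γ hgle
  have hempty : (∅ : ZS) ∈ lam := by
    refine empty_mem_ord hlamord (fun he => ?_)
    rw [he] at hgle
    exact ZFSet.notMem_empty γ hgle
  by_cases hpr : ∃ α, α ∈ γ ∧ ZFSet.sep (fun x => x = α) γ ∈ D
  · obtain ⟨α, hαγ, hα⟩ := hpr
    have hag : agreeSet γ (fun p => p.1) (fun _ => α) ∈ D :=
      D_sep_mono hUF hα (fun x hx he hh => he)
    have hrξ : Rep D γ ξ (fun _ => α) := rep_congr hUF hag hξ
    rw [rep_unique ξ _ hrξ (jD α) (hjD α)]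
    exact hsup α (hγsub1 hαγ)
  push_neg at hpr
  -- γ is infinite
  have hinf : ℵ₀ ≤ #γ.toSet := by
    by_contra hfin
    have hc : γ.toSet.Countable :=
      (Cardinal.lt_aleph0_iff_set_finite.1 (not_le.1 hfin)).countable
    have hne : γ.toSet.Nonempty := D_nonempty hUF hUF.univ_mem
    obtain ⟨e, he⟩ := hc.exists_eq_range hne
    have hs : ∀ n, ZFSet.sep (fun x => x ≠ e n) γ ∈ D := by
      intro n
      by_cases hen : e n ∈ γ
      · exact D_sep_not hUF (hpr (e n) hen)
      · refine D_sep_all hUF (fun x hx => ?_)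
        rintro rfl
        exact hen hx
    have hbig := hCC _ hs
    have hempty2 : ZFSet.sep (fun x => ∀ n, x ∈ ZFSet.sep (fun z => z ≠ e n) γ) γ = ∅ := by
      rw [ZFSet.eq_empty]
      intro y hy
      rcases ZFSet.mem_sep.1 hy with ⟨hyγ, hall⟩
      have hyr : y ∈ Set.range e := he ▸ (hyγ : y ∈ γ.toSet)
      obtain ⟨n, hn⟩ := hyr
      exact (ZFSet.mem_sep.1 (hall n)).2 hn.symm
    rw [hempty2] at hbig
    exact hUF.empty_not_mem hbig
  -- The fiber sets
  set Bf : ZS → ZS := fun ζ => (if h : ζ ∈ γ then fA ⟨ζ, h⟩ else ∅) ∩ γ1 with hBf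
  have hsubγ1 : ∀ ζ, Bf ζ ⊆ γ1 := fun ζ z hz => (ZFSet.mem_inter.1 hz).2
  -- the large set where fibers are big
  have hW : ZFSet.sep (fun ζ => #ζ.toSet < #(Bf ζ).toSet) γ ∈ D := by
    by_contra hZc
    have hZ := D_sep_not hUF hZc
    set βf : ZS → ZS := fun ζ => ZFSet.sUnion (Bf ζ) with hβf
    have hβord : ∀ ζ, IsOrd (βf ζ) := fun ζ =>
      isOrd_sUnion (fun b hb => isOrd_of_mem hγ1ord (hsubγ1 ζ hb))
    have hβsub : ∀ ζ, βf ζ ⊆ γ1 := by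
      intro ζ w hw
      rcases ZFSet.mem_sUnion.1 hw with ⟨b, hb, hwb⟩
      exact hγ1ord.1 b (hsubγ1 ζ hb) hwb
    have hβmk : ∀ ζ ∈ γ, ¬(#ζ.toSet < #(Bf ζ).toSet) → #(βf ζ).toSet ≤ #γ.toSet := by
      intro ζ hζ hn
      exact mk_sUnion_le' (Bf ζ) _ ((not_lt.1 hn).trans (mk_le_of_mem_ord hγ hζ))
        (fun b hb => hmem1 b (hsubγ1 ζ hb)) hinf
    have hβγ1 : ∀ ζ ∈ γ, ¬(#ζ.toSet < #(Bf ζ).toSet) → βf ζ ∈ γ1 := by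
      intro ζ hζ hn
      rcases ord_subset_mem_or_eq (hβord ζ) hγ1ord (hβsub ζ) with h | h
      · exact h
      · exfalso
        have h2 := hβmk ζ hζ hn
        rw [h, hγ1mk] at h2
        exact absurd h2 (not_le.2 (Order.lt_succ _))
    set Z : ZS := ZFSet.sep (fun ζ => ¬ #ζ.toSet < #(Bf ζ).toSet) γ with hZdef
    set U : ZS := zimage βf Z with hU
    set βs : ZS := ZFSet.sUnion U with hβs
    have hUel : ∀ u ∈ U, ∃ ζ, (ζ ∈ γ ∧ ¬ #ζ.toSet < #(Bf ζ).toSet) ∧ βf ζ = u := by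
      intro u hu
      rcases mem_zimage.1 hu with ⟨ζ, hζ, he⟩
      rcases ZFSet.mem_sep.1 hζ with ⟨h1, h2⟩
      exact ⟨ζ, ⟨h1, h2⟩, he⟩
    have hβsord : IsOrd βs := by
      refine isOrd_sUnion (fun b hb => ?_)
      obtain ⟨ζ, _, he⟩ := hUel b hb
      exact he ▸ hβord ζ
    have hβssub : βs ⊆ γ1 := by
      intro w hw
      rcases ZFSet.mem_sUnion.1 hw with ⟨b, hb, hwb⟩
      obtain ⟨ζ, ⟨h1, h2⟩, he⟩ := hUel b hb
      exact hγ1ord.1 b (he ▸ hβγ1 ζ h1 h2) hwb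
    have hβsmk : #βs.toSet ≤ #γ.toSet := by
      refine mk_sUnion_le' U _ ?_ (fun b hb => ?_) hinf
      · exact (mk_zimage_le βf Z).trans
          (Cardinal.mk_le_mk_of_subset (ZFSet.coe_subset_coe.2 (sep_subset _)))
      · obtain ⟨ζ, ⟨h1, h2⟩, he⟩ := hUel b hb
        exact he ▸ hβmk ζ h1 h2
    have hβsγ1 : βs ∈ γ1 := by
      rcases ord_subset_mem_or_eq hβsord hγ1ord hβssub with h | h
      · exact h
      · exfalso
        rw [h, hγ1mk] at hβsmk
        exact absurd hβsmk (not_le.2 (Order.lt_succ _))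
    set x : ZS := insert βs βs with hx
    have hxord : IsOrd x := isOrd_succ hβsord
    have hxsub : x ⊆ γ1 := by
      intro z hz
      rcases ZFSet.mem_insert_iff.1 hz with rfl | hz2
      · exact hβsγ1
      · exact hγ1ord.1 βs hβsγ1 hz2
    have hxmk : #x.toSet ≤ #γ.toSet := by
      rw [hx, show (insert βs βs).toSet = insert βs βs.toSet from ZFSet.coe_insert βs βs]
      refine le_trans Cardinal.mk_insert_le ?_
      calc #βs.toSet + 1 ≤ #γ.toSet + 1 := add_le_add_left hβsmk 1
        _ = #γ.toSet := Cardinal.add_one_eq hinf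
    have hxγ1 : x ∈ γ1 := by
      rcases ord_subset_mem_or_eq hxord hγ1ord hxsub with h | h
      · exact h
      · exfalso
        rw [h, hγ1mk] at hxmk
        exact absurd hxmk (not_le.2 (Order.lt_succ _))
    have hmemx : memSet γ (fun _ => x) fA ∈ D :=
      (rep_mem_iff hUF (hjD x) hfA).1 (hsup x hxγ1)
    obtain ⟨ζ, hζγ, hn, hmem⟩ := D_sep_two hUF hZ hmemx
    have hxB : x ∈ Bf ζ := by
      refine ZFSet.mem_inter.2 ⟨?_, hxγ1⟩
      show x ∈ (if h : ζ ∈ γ then fA ⟨ζ, h⟩ else ∅)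
      rw [dif_pos hζγ]
      exact hmem hζγ
    have h1 : x ⊆ βf ζ := fun w hw => ZFSet.mem_sUnion.2 ⟨x, hxB, hw⟩
    have h2 : βf ζ ⊆ βs := fun w hw =>
      ZFSet.mem_sUnion.2 ⟨βf ζ, mem_zimage.2 ⟨ζ, ZFSet.mem_sep.2 ⟨hζγ, hn⟩, rfl⟩, hw⟩
    exact ZFSet.mem_irrefl βs (h2 (h1 (ZFSet.mem_insert_iff.2 (Or.inl rfl))))
  -- the system of distinct representatives
  set g : ZS → ZS := sdrFun Bf with hg
  have hgspec : ∀ ζ, #ζ.toSet < #(Bf ζ).toSet → g ζ ∈ Bf ζ ∧ ∀ y ∈ ζ, g ζ ≠ g y :=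
    fun ζ h => sdrFun_spec Bf h
  have hginj : ∀ ζ₁ ζ₂, ζ₁ ∈ γ → ζ₂ ∈ γ → #ζ₁.toSet < #(Bf ζ₁).toSet →
      #ζ₂.toSet < #(Bf ζ₂).toSet → g ζ₁ = g ζ₂ → ζ₁ = ζ₂ := by
    intro ζ₁ ζ₂ h1 h2 hc1 hc2 he
    rcases ord_trichotomy ζ₁ (isOrd_of_mem hγ h1) ζ₂ (isOrd_of_mem hγ h2) with h | h | h
    · exact absurd he.symm ((hgspec ζ₂ hc2).2 ζ₁ h)
    · exact h
    · exact absurd he ((hgspec ζ₁ hc1).2 ζ₂ h)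
  set φ : ZS → ZS := fun y =>
    if h : ∃ ζ, (ζ ∈ γ ∧ #ζ.toSet < #(Bf ζ).toSet) ∧ g ζ = y then h.choose else ∅ with hφ
  have hφg : ∀ ζ, ζ ∈ γ → #ζ.toSet < #(Bf ζ).toSet → φ (g ζ) = ζ := by
    intro ζ h1 hc1
    have hex : ∃ ζ', (ζ' ∈ γ ∧ #ζ'.toSet < #(Bf ζ').toSet) ∧ g ζ' = g ζ := ⟨ζ, ⟨h1, hc1⟩, rfl⟩
    rw [hφ]
    simp only
    rw [dif_pos hex]
    obtain ⟨⟨h2, hc2⟩, he⟩ := hex.choose_spec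
    exact hginj _ _ h2 h1 hc2 hc1 he
  have hφlam : ∀ y, φ y ∈ lam := by
    intro y
    rw [hφ]
    simp only
    split
    · next h => exact hγlam h.choose_spec.1.1
    · exact hempty
  set F : ZS := zimage (fun y => ZFSet.pair y (φ y)) lam with hF
  have hFfun : IsFuncTo F lam lam := by
    refine ⟨⟨?_, ?_⟩, ?_⟩
    · intro p hp
      rcases mem_zimage.1 hp with ⟨y, hy, he⟩
      exact ⟨y, hy, φ y, he.symm⟩
    · intro y hy
      refine ⟨φ y, mem_zimage.2 ⟨y, hy, rfl⟩, ?_⟩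
      intro z hz
      rcases mem_zimage.1 hz with ⟨y', hy', he⟩
      obtain ⟨he1, he2⟩ := ZFSet.pair_inj.1 he
      rw [← he2, he1]
    · intro a b hab
      rcases mem_zimage.1 hab with ⟨y, hy, he⟩
      obtain ⟨he1, he2⟩ := ZFSet.pair_inj.1 he
      rw [← he2]
      exact hφlam y
  have hmemW : memSet γ (fun p => g p.1) fA ∈ D := by
    refine D_sep_mono hUF hW (fun ζ hζ hlt hh => ?_)
    have hb := (hgspec ζ hlt).1
    have h2 := (ZFSet.mem_inter.1 hb).1
    rw [dif_pos hh] at h2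
    exact h2
  obtain ⟨ξ', hξ'A, hξ'rep⟩ := ((Rep_iff ..).1 hfA).2 (fun p => g p.1) (exists_code γ _) hmemW
  have hpairrep : Rep D γ (ZFSet.pair ξ' ξ) (fun p => ZFSet.pair (g p.1) p.1) :=
    rep_opair hUF hξ'rep hξ
  have hpm : memSet γ (fun p => ZFSet.pair (g p.1) p.1) (fun _ => F) ∈ D := by
    refine D_sep_mono hUF hW (fun ζ hζ hlt hh => ?_)
    have hgB := (hgspec ζ hlt).1
    have hglam : g ζ ∈ lam := hγ1lam (hsubγ1 ζ hgB)
    have hmemF : ZFSet.pair (g ζ) (φ (g ζ)) ∈ F := mem_zimage.2 ⟨g ζ, hglam, rfl⟩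
    rwa [hφg ζ hζ hlt] at hmemF
  have hpmem : ZFSet.pair ξ' ξ ∈ jD F := (rep_mem_iff hUF hpairrep (hjD F)).2 hpm
  exact hclosed F hFfun ξ' hξ'A ξ hpmem

end UAPaper
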